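/- Let R be a discrete valuation ring with uniformizer t, K its fraction field, M a finite free R-module inside V = K ⊗_R M, and δ(β) = max {n | β ∈ t^n • M} for nonzero β. If e₁, ..., eₙ is a K-basis of V such that for all f₁, ..., fₙ ∈ K (not all zero), δ(Σᵢ fᵢ eᵢ) = minᵢ {δ(fᵢ eᵢ) : fᵢ ≠ 0}, then M = ⊕ᵢ (M ∩ K·eᵢ), i.e., M is the internal direct sum of its intersections with the lines spanned by the eᵢ. -/

import Mathlib

/-- If a K-basis e of V satisfies δ(Σ fᵢeᵢ) = minᵢ δ(fᵢeᵢ) (minimum over the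
nonzero coefficients), then M is the internal direct sum of its intersections
with the lines K·eᵢ. -/
theorem stmt13 {R : Type*} [CommRing R] [IsDomain R] [IsDiscreteValuationRing R]
    {K : Type*} [Field K] [Algebra R K] [IsFractionRing R K]
    (t : R) (ht : Irreducible t)
    {V : Type*} [AddCommGroup V] [Module K V] [Module R V] [IsScalarTower R K V]
    (M : Submodule R V) [Module.Free R M] [Module.Finite R M]
    (hspan : Submodule.span K (M : Set V) = ⊤)
    (δ : V → ℤ)
    (hδ : ∀ β : V, β ≠ 0 →
      IsGreatest {n : ℤ | (algebraMap R K t) ^ (-n) • β ∈ M} (δ β))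
    (n : ℕ) (hrk : Module.finrank R ↥M = n)
    (e : Module.Basis (Fin n) K V)
    (hsplit : ∀ f : Fin n → K, (∃ i, f i ≠ 0) →
      IsLeast {d : ℤ | ∃ i, f i ≠ 0 ∧ d = δ (f i • e i)} (δ (∑ i, f i • e i))) :
    (⨆ i, M ⊓ (Submodule.span K {e i}).restrictScalars R) = M ∧
      iSupIndep (fun i => M ⊓ (Submodule.span K {e i}).restrictScalars R) := by
  have htK : (algebraMap R K) t ≠ 0 := fun h =>
    ht.ne_zero (by simpa using (IsFractionRing.injective R K) (h.trans (map_zero _).symm))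
  have key : ∀ γ : V, γ ≠ 0 → 0 ≤ δ γ → γ ∈ M := by
    intro γ hγ h0
    have h1 := (hδ γ hγ).1
    obtain ⟨k, hk⟩ := Int.eq_ofNat_of_zero_le h0
    have hγeq : γ = (t ^ k) • ((algebraMap R K t) ^ (-δ γ) • γ) := by
      rw [← algebraMap_smul K (t ^ k), smul_smul, map_pow, ← zpow_natCast,
        ← zpow_add₀ htK, ← hk]
      simp
    rw [hγeq]
    exact M.smul_mem _ h1
  constructor
  · apply le_antisymm (iSup_le fun i => inf_le_left)
    intro β hβ
    have hrepr : β = ∑ i, e.repr β i • e i := (e.sum_repr β).symm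
    have hmem : ∀ i, (e.repr β i) • e i ∈ M ⊓ (Submodule.span K {e i}).restrictScalars R := by
      intro i
      by_cases hf : e.repr β i = 0
      · simp [hf]
      · refine ⟨?_, Submodule.smul_mem _ _ (Submodule.mem_span_singleton_self _)⟩
        have hβ0 : β ≠ 0 := by intro h; apply hf; simp [h]
        have hls := hsplit (fun i => e.repr β i) ⟨i, hf⟩
        have h0mem : (0 : ℤ) ∈ {m : ℤ | (algebraMap R K t) ^ (-m) • β ∈ M} := by
          simpa using hβ
        have hβδ : 0 ≤ δ (∑ i, e.repr β i • e i) := by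
          rw [← hrepr]; exact (hδ β hβ0).2 h0mem
        have hle : δ (∑ i, e.repr β i • e i) ≤ δ (e.repr β i • e i) := hls.2 ⟨i, hf, rfl⟩
        exact key _ (smul_ne_zero hf (e.ne_zero i)) (hβδ.trans hle)
    rw [hrepr]
    exact Submodule.sum_mem _ fun i _ => Submodule.mem_iSup_of_mem i (hmem i)
  · intro i
    have hK := e.linearIndependent.iSupIndep_span_singleton (R := K) i
    have hbig : Disjoint ((Submodule.span K {e i}).restrictScalars R)
        ((⨆ j, ⨆ _ : j ≠ i, Submodule.span K {e j}).restrictScalars R) := by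
      rw [disjoint_iff]
      rw [disjoint_iff] at hK
      have h1 : ((Submodule.span K {e i}) ⊓ ⨆ j, ⨆ _ : j ≠ i, Submodule.span K {e j}).restrictScalars R
          = ((Submodule.span K {e i}).restrictScalars R) ⊓
            ((⨆ j, ⨆ _ : j ≠ i, Submodule.span K {e j}).restrictScalars R) := rfl
      rw [← h1, hK]
      rfl
    refine hbig.mono inf_le_right (iSup₂_le fun j hj =>
      inf_le_right.trans (fun x hx =>
        (le_iSup₂ (f := fun j (_ : j ≠ i) => Submodule.span K {e j}) j hj) hx))
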